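/- Let a, b ∈ A and p ∈ P. Then: (i) ‖aba‖ ≤ ‖a²‖·‖b‖ = ‖a‖²·‖b‖; (ii) the quadratic mapping J_a : A → A, J_a(b) := aba, is norm continuous; (iii) if p ≠ 0 then ‖p‖ = 1; (iv) ‖pap‖ ≤ ‖a‖. -/

import Mathlib

/-- A synaptic algebra: a real vector subspace `carrier` of a unital associative
real algebra `R`, containing `1`, equipped with a positive cone `Pos` making it a
partially ordered archimedean real vector space with order unit `1`, and
satisfying conditions [SA2]–[SA9]. The partial order is `a ≤ b ↔ b - a ∈ Pos`. -/
structure SynapticAlgebra (R : Type*) [Ring R] [Algebra ℝ R] where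
  carrier : Set R
  one_mem : (1 : R) ∈ carrier
  add_mem : ∀ {a b : R}, a ∈ carrier → b ∈ carrier → a + b ∈ carrier
  smul_mem : ∀ (t : ℝ) {a : R}, a ∈ carrier → t • a ∈ carrier
  neg_mem : ∀ {a : R}, a ∈ carrier → -a ∈ carrier
  Pos : Set R
  pos_subset : Pos ⊆ carrier
  pos_add : ∀ {a b : R}, a ∈ Pos → b ∈ Pos → a + b ∈ Pos
  pos_smul : ∀ {t : ℝ}, 0 ≤ t → ∀ {a : R}, a ∈ Pos → t • a ∈ Pos
  pos_antisymm : ∀ {a : R}, a ∈ Pos → -a ∈ Pos → a = 0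
  arch : ∀ {a b : R}, a ∈ carrier → b ∈ carrier →
    (∀ n : ℕ, b - (n : ℝ) • a ∈ Pos) → -a ∈ Pos
  one_pos : (1 : R) ∈ Pos
  orderUnit : ∀ {a : R}, a ∈ carrier → ∃ n : ℕ, (n : ℝ) • (1 : R) - a ∈ Pos
  SA2 : ∀ {a b : R}, a ∈ Pos → b ∈ Pos → a * b = b * a → a * b ∈ Pos
  SA3 : ∀ {a : R}, a ∈ carrier → a * a ∈ Pos
  SA4 : ∀ {a b : R}, a ∈ Pos → b ∈ Pos → a * b * a ∈ Pos
  SA5 : ∀ {a b : R}, a ∈ carrier → b ∈ Pos → a * b * a = 0 → a * b = 0 ∧ b * a = 0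
  SA6 : ∀ {a : R}, a ∈ Pos →
    ∃ b : R, b ∈ Pos ∧ (∀ c ∈ carrier, c * a = a * c → c * b = b * c) ∧ b * b = a
  SA7 : ∀ {a : R}, a ∈ carrier →
    ∃ p : R, p ∈ carrier ∧ p * p = p ∧ ∀ b ∈ carrier, (a * b = 0 ↔ p * b = 0)
  SA8 : ∀ {a : R}, a ∈ carrier → a - 1 ∈ Pos → ∃ b ∈ carrier, a * b = 1 ∧ b * a = 1
  SA9 : ∀ {a b : R}, a ∈ carrier → b ∈ carrier → ∀ s : ℕ → R,
    (∀ n, s n ∈ carrier) → (∀ n, s (n + 1) - s n ∈ Pos) →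
    (∀ m n, s m * s n = s n * s m) → (∀ n, s n * b = b * s n) →
    (∀ ε : ℝ, 0 < ε →
      ∃ N : ℕ, ∀ n ≥ N, (a - s n) - (-ε) • (1 : R) ∈ Pos ∧ ε • (1 : R) - (a - s n) ∈ Pos) →
    a * b = b * a

namespace SynapticAlgebra

variable {R : Type*} [Ring R] [Algebra ℝ R]

/-- The partial order of the synaptic algebra: `a ≤ b` iff `b - a` is in the positive cone. -/
def le (S : SynapticAlgebra R) (a b : R) : Prop := b - a ∈ S.Pos

/-- The identification of a real number `t` with the element `t·1` of the algebra. -/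
def scal (_ : SynapticAlgebra R) (t : ℝ) : R := t • (1 : R)

/-- The order-unit norm: `‖a‖ = inf {t : ℝ | 0 < t ∧ -t·1 ≤ a ≤ t·1}`. -/
noncomputable def nrm (S : SynapticAlgebra R) (a : R) : ℝ :=
  sInf {t : ℝ | 0 < t ∧ S.le (S.scal (-t)) a ∧ S.le a (S.scal t)}

/-- `p` is a projection: an idempotent element of the algebra. -/
def IsProj (S : SynapticAlgebra R) (p : R) : Prop := p ∈ S.carrier ∧ p * p = p

/-- `e` is an effect: an element with `0 ≤ e ≤ 1`. -/
def IsEff (S : SynapticAlgebra R) (e : R) : Prop := e ∈ S.carrier ∧ S.le 0 e ∧ S.le e 1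

/-- `b ∈ CC(a)`: `b` is in the algebra and commutes with every element of the
algebra that commutes with `a` (the double commutant of `a`). -/
def inCC (S : SynapticAlgebra R) (a b : R) : Prop :=
  b ∈ S.carrier ∧ ∀ c ∈ S.carrier, c * a = a * c → c * b = b * c

/-- The square root of a positive element (chosen via [SA6]; it is unique). -/
noncomputable def sqrt (S : SynapticAlgebra R) (a : R) : R :=
  @dite R (a ∈ S.Pos) (Classical.dec _) (fun h => Classical.choose (S.SA6 h)) (fun _ => 0)

/-- The carrier projection `a°` of `a` (chosen via [SA7]; it is unique):
the projection `p` such that for all `b` in the algebra, `ab = 0 ↔ pb = 0`. -/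
noncomputable def carr (S : SynapticAlgebra R) (a : R) : R :=
  @dite R (a ∈ S.carrier) (Classical.dec _) (fun h => Classical.choose (S.SA7 h)) (fun _ => 0)

/-- Absolute value: `|a| := (a²)^{1/2}`. -/
noncomputable def abs (S : SynapticAlgebra R) (a : R) : R := S.sqrt (a * a)

/-- Positive part: `a⁺ := ½(|a| + a)`. -/
noncomputable def posPart (S : SynapticAlgebra R) (a : R) : R := (1/2 : ℝ) • (S.abs a + a)

/-- Negative part: `a⁻ := ½(|a| − a)`. -/
noncomputable def negPart (S : SynapticAlgebra R) (a : R) : R := (1/2 : ℝ) • (S.abs a - a)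

/-- Signum: `sgn(a) := (a⁺)° − (a⁻)°`. -/
noncomputable def sgn (S : SynapticAlgebra R) (a : R) : R :=
  S.carr (S.posPart a) - S.carr (S.negPart a)

/-- The Sasaki mapping: `φ_a(b) := (aba)°`. -/
noncomputable def sas (S : SynapticAlgebra R) (a b : R) : R := S.carr (a * b * a)

/-- `m` is the infimum of the projections `p` and `q` in the poset `P` of projections. -/
def IsMeet (S : SynapticAlgebra R) (p q m : R) : Prop :=
  S.IsProj m ∧ S.le m p ∧ S.le m q ∧ ∀ r, S.IsProj r → S.le r p → S.le r q → S.le r m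

/-- `j` is the supremum of the projections `p` and `q` in the poset `P` of projections. -/
def IsJoin (S : SynapticAlgebra R) (p q j : R) : Prop :=
  S.IsProj j ∧ S.le p j ∧ S.le q j ∧ ∀ r, S.IsProj r → S.le p r → S.le q r → S.le j r

end SynapticAlgebra

open SynapticAlgebra Filter

variable {R : Type*} [Ring R] [Algebra ℝ R]

open SynapticAlgebra

namespace SAux

variable {R : Type*} [Ring R] [Algebra ℝ R] (S : SynapticAlgebra R)

lemma pos_smul_one {t : ℝ} (ht : 0 ≤ t) : t • (1:R) ∈ S.Pos := S.pos_smul ht S.one_pos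

lemma zero_pos : (0:R) ∈ S.Pos := by simpa using pos_smul_one S (le_refl 0)

lemma smul_one_mem (t : ℝ) : t • (1:R) ∈ S.carrier := S.smul_mem t S.one_mem

lemma sub_mem {a b : R} (ha : a ∈ S.carrier) (hb : b ∈ S.carrier) :
    a - b ∈ S.carrier := by
  simpa [sub_eq_add_neg] using S.add_mem ha (S.neg_mem hb)

lemma sq_mem {a : R} (ha : a ∈ S.carrier) : a * a ∈ S.carrier := S.pos_subset (S.SA3 ha)

lemma jord_mem {a b : R} (ha : a ∈ S.carrier) (hb : b ∈ S.carrier) :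
    a*b + b*a ∈ S.carrier := by
  have h : a*b + b*a = (a+b)*(a+b) - a*a - b*b := by noncomm_ring
  rw [h]
  exact sub_mem S (sub_mem S (sq_mem S (S.add_mem ha hb)) (sq_mem S ha)) (sq_mem S hb)

lemma triple_mem {a b : R} (ha : a ∈ S.carrier) (hb : b ∈ S.carrier) :
    a*b*a ∈ S.carrier := by
  have h : a*b*a = (1/2 : ℝ) • ((a*(a*b+b*a) + (a*b+b*a)*a) - ((a*a)*b + b*(a*a))) := by
    have h2 : (a*(a*b+b*a) + (a*b+b*a)*a) - ((a*a)*b + b*(a*a)) = a*b*a + a*b*a := by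
      noncomm_ring
    rw [h2, ← two_smul ℝ, smul_smul]; norm_num
  rw [h]
  exact S.smul_mem _ (sub_mem S (jord_mem S ha (jord_mem S ha hb))
    (jord_mem S (sq_mem S ha) hb))

/-- archimedean: if `x + ε·1 ∈ Pos` for all `ε > 0` then `x ∈ Pos`. -/
lemma arch' {x : R} (hx : x ∈ S.carrier) (h : ∀ ε : ℝ, 0 < ε → x + ε • (1:R) ∈ S.Pos) :
    x ∈ S.Pos := by
  have h2 : ∀ n : ℕ, (1:R) - (n:ℝ) • (-x) ∈ S.Pos := by
    intro n
    rcases Nat.eq_zero_or_pos n with h0 | hn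
    · simpa [h0] using S.one_pos
    · have hn0 : (0:ℝ) < (n:ℝ) := by exact_mod_cast hn
      have hpos : (0:ℝ) < (n:ℝ)⁻¹ := by positivity
      have h3 := S.pos_smul hn0.le (h _ hpos)
      have hne : (n:ℝ) ≠ 0 := ne_of_gt hn0
      have e : (n:ℝ) • (x + (n:ℝ)⁻¹ • (1:R)) = (1:R) - (n:ℝ) • (-x) := by
        rw [smul_add, smul_smul, mul_inv_cancel₀ hne]; module
      rwa [e] at h3
  have h4 := S.arch (S.neg_mem hx) S.one_mem h2
  simpa using h4

/-- the defining set of the norm, in convenient form -/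
def bset (a : R) : Set ℝ :=
  {t : ℝ | 0 < t ∧ a + t • (1:R) ∈ S.Pos ∧ t • (1:R) - a ∈ S.Pos}

lemma nrm_def (a : R) : S.nrm a = sInf (bset S a) := by
  unfold SynapticAlgebra.nrm SynapticAlgebra.le SynapticAlgebra.scal bset
  congr 1; ext t
  simp only [Set.mem_setOf_eq, neg_smul, sub_neg_eq_add]

lemma bset_nonempty {a : R} (ha : a ∈ S.carrier) : (bset S a).Nonempty := by
  obtain ⟨n, hn⟩ := S.orderUnit ha
  obtain ⟨m, hm⟩ := S.orderUnit (S.neg_mem ha)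
  refine ⟨(n:ℝ) + m + 1, by positivity, ?_, ?_⟩
  · have h1 := S.pos_add hm (pos_smul_one S (show (0:ℝ) ≤ (n:ℝ)+1 by positivity))
    have e : ((m:ℝ)•(1:R) - -a) + ((n:ℝ)+1)•(1:R) = a + ((n:ℝ) + m + 1)•(1:R) := by module
    rwa [e] at h1
  · have h1 := S.pos_add hn (pos_smul_one S (show (0:ℝ) ≤ (m:ℝ)+1 by positivity))
    have e : ((n:ℝ)•(1:R) - a) + ((m:ℝ)+1)•(1:R) = ((n:ℝ) + m + 1)•(1:R) - a := by module
    rwa [e] at h1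

lemma bset_bdd (a : R) : BddBelow (bset S a) := ⟨0, fun t ht => le_of_lt ht.1⟩

lemma nrm_nonneg {a : R} (ha : a ∈ S.carrier) : 0 ≤ S.nrm a := by
  rw [nrm_def]
  exact le_csInf (bset_nonempty S ha) (fun t ht => ht.1.le)

lemma nrm_le {a : R} {K : ℝ} (ha : a ∈ S.carrier) (hK : 0 ≤ K)
    (h1 : a + K•(1:R) ∈ S.Pos) (h2 : K•(1:R) - a ∈ S.Pos) : S.nrm a ≤ K := by
  rw [nrm_def]
  refine le_of_forall_pos_le_add (fun ε hε => csInf_le (bset_bdd S a) ?_)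
  refine ⟨by linarith, ?_, ?_⟩
  · have h3 := S.pos_add h1 (pos_smul_one S hε.le)
    have e : (a + K•(1:R)) + ε•(1:R) = a + (K+ε)•(1:R) := by module
    rwa [e] at h3
  · have h3 := S.pos_add h2 (pos_smul_one S hε.le)
    have e : (K•(1:R) - a) + ε•(1:R) = (K+ε)•(1:R) - a := by module
    rwa [e] at h3

lemma nrm_upper {a : R} (ha : a ∈ S.carrier) : S.nrm a • (1:R) - a ∈ S.Pos := by
  apply arch' S (sub_mem S (smul_one_mem S _) ha)
  intro ε hε
  have hlt : sInf (bset S a) < S.nrm a + ε := by rw [nrm_def] at *; linarith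
  obtain ⟨t, htmem, htlt⟩ := exists_lt_of_csInf_lt (bset_nonempty S ha) hlt
  have h3 := S.pos_add htmem.2.2 (pos_smul_one S (show 0 ≤ S.nrm a + ε - t by linarith))
  have e : (t•(1:R) - a) + (S.nrm a + ε - t)•(1:R) = (S.nrm a•(1:R) - a) + ε•(1:R) := by module
  rwa [e] at h3

lemma nrm_lower {a : R} (ha : a ∈ S.carrier) : a + S.nrm a • (1:R) ∈ S.Pos := by
  apply arch' S (S.add_mem ha (smul_one_mem S _))
  intro ε hε
  have hlt : sInf (bset S a) < S.nrm a + ε := by rw [nrm_def] at *; linarith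
  obtain ⟨t, htmem, htlt⟩ := exists_lt_of_csInf_lt (bset_nonempty S ha) hlt
  have h3 := S.pos_add htmem.2.1 (pos_smul_one S (show 0 ≤ S.nrm a + ε - t by linarith))
  have e : (a + t•(1:R)) + (S.nrm a + ε - t)•(1:R) = (a + S.nrm a•(1:R)) + ε•(1:R) := by module
  rwa [e] at h3

lemma eq_zero_of_nrm {a : R} (ha : a ∈ S.carrier) (h : S.nrm a = 0) : a = 0 := by
  have h1 := nrm_upper S ha
  have h2 := nrm_lower S ha
  rw [h] at h1 h2
  simp only [zero_smul, zero_sub, add_zero] at h1 h2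
  exact S.pos_antisymm h2 h1

lemma nrm_smul_le {a : R} {τ : ℝ} (hτ : 0 ≤ τ) (ha : a ∈ S.carrier) :
    S.nrm (τ • a) ≤ τ * S.nrm a := by
  apply nrm_le S (S.smul_mem τ ha) (mul_nonneg hτ (nrm_nonneg S ha))
  · have h1 := S.pos_smul hτ (nrm_lower S ha)
    have e : τ • (a + S.nrm a•(1:R)) = τ•a + (τ * S.nrm a)•(1:R) := by
      rw [smul_add, smul_smul]
    rwa [e] at h1
  · have h1 := S.pos_smul hτ (nrm_upper S ha)
    have e : τ • (S.nrm a•(1:R) - a) = (τ * S.nrm a)•(1:R) - τ•a := by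
      rw [smul_sub, smul_smul]
    rwa [e] at h1

lemma nrm_add_le {a b : R} (ha : a ∈ S.carrier) (hb : b ∈ S.carrier) :
    S.nrm (a + b) ≤ S.nrm a + S.nrm b := by
  apply nrm_le S (S.add_mem ha hb) (by exact add_nonneg (nrm_nonneg S ha) (nrm_nonneg S hb))
  · have h1 := S.pos_add (nrm_lower S ha) (nrm_lower S hb)
    have e : (a + S.nrm a•(1:R)) + (b + S.nrm b•(1:R)) = (a+b) + (S.nrm a + S.nrm b)•(1:R) := by module
    rwa [e] at h1
  · have h1 := S.pos_add (nrm_upper S ha) (nrm_upper S hb)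
    have e : (S.nrm a•(1:R) - a) + (S.nrm b•(1:R) - b) = (S.nrm a + S.nrm b)•(1:R) - (a+b) := by module
    rwa [e] at h1

/-- if `-t ≤ a ≤ t` then `a² ≤ t²`. -/
lemma sq_le {a : R} {t : ℝ} (h1 : a + t•(1:R) ∈ S.Pos) (h2 : t•(1:R) - a ∈ S.Pos) :
    (t*t) • (1:R) - a*a ∈ S.Pos := by
  have h1' : t•(1:R) + a ∈ S.Pos := by rwa [add_comm] at h1
  have e1 : (t•(1:R) - a) * (t•(1:R) + a) = (t*t)•(1:R) - a*a := by
    simp [sub_mul, mul_add, smul_mul_assoc, mul_smul_comm, smul_smul]; module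
  have e2 : (t•(1:R) + a) * (t•(1:R) - a) = (t*t)•(1:R) - a*a := by
    simp [add_mul, mul_sub, smul_mul_assoc, mul_smul_comm, smul_smul]; module
  have h3 := S.SA2 h2 h1' (e1.trans e2.symm)
  rwa [e1] at h3

lemma sq_le_nrm {a : R} (ha : a ∈ S.carrier) :
    (S.nrm a * S.nrm a) • (1:R) - a*a ∈ S.Pos :=
  sq_le S (nrm_lower S ha) (nrm_upper S ha)

/-- if `a² ≤ t²` with `t > 0` then `-t ≤ a ≤ t`. -/
lemma sqrt_bound {a : R} {t : ℝ} (ha : a ∈ S.carrier) (ht : 0 < t)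
    (h : (t*t)•(1:R) - a*a ∈ S.Pos) :
    t•(1:R) - a ∈ S.Pos ∧ a + t•(1:R) ∈ S.Pos := by
  have hinv : (0:ℝ) ≤ (2*t)⁻¹ := by positivity
  have hne : (2*t) ≠ 0 := by positivity
  constructor
  · have hsq := S.SA3 (sub_mem S (smul_one_mem S t) ha)
    have hadd := S.pos_add hsq h
    have e : ((t•(1:R)-a)*(t•(1:R)-a)) + ((t*t)•(1:R) - a*a) = (2*t)•(t•(1:R) - a) := by
      simp [sub_mul, mul_sub, smul_mul_assoc, mul_smul_comm, smul_smul, smul_sub]; module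
    rw [e] at hadd
    have h4 := S.pos_smul hinv hadd
    rwa [smul_smul, inv_mul_cancel₀ hne, one_smul] at h4
  · have hsq := S.SA3 (S.add_mem ha (smul_one_mem S t))
    have hadd := S.pos_add hsq h
    have e : ((a + t•(1:R))*(a + t•(1:R))) + ((t*t)•(1:R) - a*a) = (2*t)•(a + t•(1:R)) := by
      simp [add_mul, mul_add, smul_mul_assoc, mul_smul_comm, smul_smul, smul_add]; module
    rw [e] at hadd
    have h4 := S.pos_smul hinv hadd
    rwa [smul_smul, inv_mul_cancel₀ hne, one_smul] at h4

lemma nrm_sq {a : R} (ha : a ∈ S.carrier) : S.nrm (a*a) = S.nrm a ^ 2 := by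
  have hn := nrm_nonneg S ha
  have hnsq := nrm_nonneg S (sq_mem S ha)
  apply le_antisymm
  · rw [pow_two]
    apply nrm_le S (sq_mem S ha) (mul_nonneg hn hn)
    · exact S.pos_add (S.SA3 ha) (pos_smul_one S (mul_nonneg hn hn))
    · exact sq_le_nrm S ha
  · refine le_of_forall_pos_le_add (fun ε hε => ?_)
    set t := Real.sqrt (S.nrm (a*a) + ε) with htdef
    have harg : 0 ≤ S.nrm (a*a) + ε := by linarith
    have ht : 0 < t := Real.sqrt_pos.2 (by linarith)
    have htt : t*t = S.nrm (a*a) + ε := Real.mul_self_sqrt harg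
    have h : (t*t)•(1:R) - a*a ∈ S.Pos := by
      rw [htt]
      have h1 := S.pos_add (nrm_upper S (sq_mem S ha)) (pos_smul_one S hε.le)
      have e : (S.nrm (a*a)•(1:R) - a*a) + ε•(1:R) = (S.nrm (a*a) + ε)•(1:R) - a*a := by module
      rwa [e] at h1
    obtain ⟨hu, hl⟩ := sqrt_bound S ha ht h
    have h5 := nrm_le S ha ht.le hl hu
    nlinarith [htt]


/-- uniform lower-bound property for the quadratic map -/
def Hb (S : SynapticAlgebra R) (a : R) (ρ : ℝ) : Prop :=
  ∀ c ∈ S.Pos, a * c * a + (ρ * S.nrm c) • (1:R) ∈ S.Pos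

lemma Hb_trivial {a c : R} (ρ : ℝ) (hc : c ∈ S.Pos) (h0 : S.nrm c = 0) :
    a * c * a + (ρ * S.nrm c) • (1:R) ∈ S.Pos := by
  have hc0 : c = 0 := eq_zero_of_nrm S (S.pos_subset hc) h0
  rw [h0, hc0]
  simpa using zero_pos S

lemma crude {a : R} (ha : a ∈ S.carrier) : ∃ ρ : ℝ, 0 ≤ ρ ∧ Hb S a ρ := by
  obtain ⟨n, hn⟩ := S.orderUnit (S.neg_mem ha)
  set x := a + (n:ℝ)•(1:R) with hx
  have hxpos : x ∈ S.Pos := by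
    have e : (n:ℝ)•(1:R) - -a = x := by rw [hx]; module
    rwa [e] at hn
  have hxmem := S.pos_subset hxpos
  set N := S.nrm x with hN
  have hN0 : 0 ≤ N := nrm_nonneg S hxmem
  refine ⟨(n:ℝ) * (N+1)^2, by positivity, ?_⟩
  intro c hc
  by_cases h0 : S.nrm c = 0
  · exact Hb_trivial S _ hc h0
  have hcmem := S.pos_subset hc
  have hcpos : 0 < S.nrm c := lt_of_le_of_ne (nrm_nonneg S hcmem) (Ne.symm h0)
  set τ := S.nrm c with hτ
  set d := τ⁻¹ • c with hd
  have hdpos : d ∈ S.Pos := S.pos_smul (by positivity) hc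
  have hdmem := S.pos_subset hdpos
  have hdnrm : S.nrm d ≤ 1 := by
    have h1 := nrm_smul_le S (show (0:ℝ) ≤ τ⁻¹ by positivity) hcmem
    rw [← hd, ← hτ, inv_mul_cancel₀ (ne_of_gt hcpos)] at h1
    exact h1
  have key : a * d * a + ((n:ℝ)*(N+1)^2) • (1:R) ∈ S.Pos := by
    have p1 : x * d * x ∈ S.Pos := S.SA4 hxpos hdpos
    have p2 : (((n:ℝ))^2) • d ∈ S.Pos := S.pos_smul (by positivity) hdpos
    have p3 : ((N+1)^2)•(1:R) - (x*d + d*x) ∈ S.Pos := by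
      have q1 : (x+d)*(x+d) - (x*d + d*x) ∈ S.Pos := by
        have h2 := S.pos_add (S.SA3 hxmem) (S.SA3 hdmem)
        have e : x*x + d*d = (x+d)*(x+d) - (x*d + d*x) := by noncomm_ring
        rwa [e] at h2
      have q2 : (S.nrm (x+d) * S.nrm (x+d))•(1:R) - (x+d)*(x+d) ∈ S.Pos :=
        sq_le_nrm S (S.add_mem hxmem hdmem)
      have q3 : ((N+1)^2 - S.nrm (x+d) * S.nrm (x+d)) • (1:R) ∈ S.Pos := by
        apply pos_smul_one
        have h4 : S.nrm (x+d) ≤ N + 1 :=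
          le_trans (nrm_add_le S hxmem hdmem) (by linarith)
        nlinarith [nrm_nonneg S (S.add_mem hxmem hdmem)]
      have h5 := S.pos_add (S.pos_add q1 q2) q3
      have e : ((x+d)*(x+d) - (x*d + d*x)) + ((S.nrm (x+d) * S.nrm (x+d))•(1:R) - (x+d)*(x+d))
          + ((N+1)^2 - S.nrm (x+d) * S.nrm (x+d)) • (1:R)
          = ((N+1)^2)•(1:R) - (x*d + d*x) := by module
      rwa [e] at h5
    have h6 := S.pos_add (S.pos_add p1 p2) (S.pos_smul (Nat.cast_nonneg n) p3)
    have e : x*d*x + ((n:ℝ)^2)•d + (n:ℝ)•(((N+1)^2)•(1:R) - (x*d + d*x))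
        = a * d * a + ((n:ℝ)*(N+1)^2) • (1:R) := by
      rw [hx]
      simp only [add_mul, mul_add, smul_mul_assoc, mul_smul_comm, smul_smul, smul_sub,
        smul_add, mul_one, one_mul]
      module
    rwa [e] at h6
  have h7 := S.pos_smul hcpos.le key
  have e : τ • (a * d * a + ((n:ℝ)*(N+1)^2) • (1:R))
      = a * c * a + ((n:ℝ)*(N+1)^2 * S.nrm c) • (1:R) := by
    rw [hd]
    simp only [smul_add, smul_smul, mul_smul_comm, smul_mul_assoc]
    rw [mul_inv_cancel₀ (ne_of_gt hcpos), ← hτ]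
    module
  rwa [e] at h7

lemma nrm_sq_pos {a : R} (ha : a ∈ S.carrier) (ha0 : a ≠ 0) : 0 < S.nrm (a*a) := by
  rcases (nrm_nonneg S (sq_mem S ha)).lt_or_eq with h | h
  · exact h
  exfalso; apply ha0
  have hsq : a*a = 0 := eq_zero_of_nrm S (sq_mem S ha) h.symm
  have h2 := (S.SA5 ha S.one_pos (by simpa using hsq)).1
  simpa using h2

lemma step {a : R} {ρ : ℝ} (ha : a ∈ S.carrier) (ha0 : a ≠ 0) (hρ : 0 ≤ ρ)
    (hH : Hb S a ρ) :
    Hb S a (S.nrm (a*a) * (Real.sqrt (1 + 2*ρ/S.nrm (a*a)) - 1)) := by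
  set A := S.nrm (a*a) with hA
  have hA0 : 0 < A := nrm_sq_pos S ha ha0
  intro c hc
  by_cases h0 : S.nrm c = 0
  · exact Hb_trivial S _ hc h0
  have hcmem := S.pos_subset hc
  have hcn : 0 < S.nrm c := lt_of_le_of_ne (nrm_nonneg S hcmem) (Ne.symm h0)
  set ν := S.nrm c with hν
  set lam := A * ν with hlam
  have hlam0 : 0 < lam := mul_pos hA0 hcn
  obtain ⟨s, hs, -, hss⟩ := S.SA6 hc
  have hsmem := S.pos_subset hs
  have hf : (2*lam)•(1:R) - s*(a*a)*s ∈ S.Pos := by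
    have h1 : s*(A•(1:R) - a*a)*s ∈ S.Pos := S.SA4 hs (nrm_upper S (sq_mem S ha))
    have h2 : A•(ν•(1:R) - c) ∈ S.Pos := S.pos_smul hA0.le (nrm_upper S hcmem)
    have h3 : lam•(1:R) ∈ S.Pos := pos_smul_one S hlam0.le
    have h4 := S.pos_add (S.pos_add h1 h2) h3
    have hexp : s*(A•(1:R) - a*a)*s = A•(s*s) - s*(a*a)*s := by
      simp [mul_sub, sub_mul, mul_smul_comm, smul_mul_assoc, mul_one]
    rw [hexp, hss] at h4
    have e : (A•c - s*(a*a)*s) + A•(ν•(1:R) - c) + lam•(1:R)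
        = (2*lam)•(1:R) - s*(a*a)*s := by
      rw [hlam]; module
    rwa [e] at h4
  have hc'pos : s*((2*lam)•(1:R) - s*(a*a)*s)*s ∈ S.Pos := S.SA4 hs hf
  set c' := s*((2*lam)•(1:R) - s*(a*a)*s)*s with hc'def
  have hc'eq : c' = (2*lam)•c - c*(a*a)*c := by
    rw [hc'def, ← hss]
    simp only [mul_sub, sub_mul, mul_smul_comm, smul_mul_assoc, mul_one, mul_assoc]
  have hc'mem : c' ∈ S.carrier := S.pos_subset hc'pos
  have hub : (2*lam*ν)•(1:R) - c' ∈ S.Pos := by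
    have h1 := S.pos_smul (show (0:ℝ) ≤ 2*lam by linarith) (nrm_upper S hcmem)
    have h2 := S.SA4 hc (S.SA3 ha)
    have h3 := S.pos_add h1 h2
    have e : (2*lam)•(ν•(1:R) - c) + c*(a*a)*c = (2*lam*ν)•(1:R) - c' := by
      rw [hc'eq]; rw [smul_sub, smul_smul]; module
    rwa [e] at h3
  have hc'nrm : S.nrm c' ≤ 2*lam*ν := by
    have h2lamν : (0:ℝ) ≤ 2*lam*ν := by nlinarith
    apply nrm_le S hc'mem h2lamν
    · exact S.pos_add hc'pos (pos_smul_one S h2lamν)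
    · exact hub
  have hw := hH c' hc'pos
  have hw2 : a*c'*a + (ρ*(2*lam*ν))•(1:R) ∈ S.Pos := by
    have hpad : (ρ*(2*lam*ν) - ρ*S.nrm c') • (1:R) ∈ S.Pos := by
      apply pos_smul_one
      nlinarith [hc'nrm]
    have h1 := S.pos_add hw hpad
    have e : (a*c'*a + (ρ * S.nrm c')•(1:R)) + (ρ*(2*lam*ν) - ρ*S.nrm c') • (1:R)
        = a*c'*a + (ρ*(2*lam*ν))•(1:R) := by module
    rwa [e] at h1
  set w := a*c*a with hwdef
  have hwid : a*c'*a = (2*lam)•w - w*w := by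
    rw [hc'eq, hwdef]
    simp only [mul_sub, sub_mul, mul_smul_comm, smul_mul_assoc, mul_assoc]
  rw [hwid] at hw2
  set t := Real.sqrt (lam^2 + 2*ρ*lam*ν) with htdef
  have harg : 0 ≤ lam^2 + 2*ρ*lam*ν := by nlinarith [mul_pos hlam0 hlam0, mul_nonneg (mul_nonneg hρ hlam0.le) hcn.le]
  have ht0 : 0 < t := Real.sqrt_pos.2 (by nlinarith [mul_pos hlam0 hlam0, mul_nonneg (mul_nonneg hρ hlam0.le) hcn.le])
  have htt : t*t = lam^2 + 2*ρ*lam*ν := Real.mul_self_sqrt harg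
  have hsq : (t*t)•(1:R) - (lam•(1:R) - w)*(lam•(1:R) - w) ∈ S.Pos := by
    rw [htt]
    have e : ((2*lam)•w - w*w) + (ρ*(2*lam*ν))•(1:R)
        = (lam^2 + 2*ρ*lam*ν)•(1:R) - (lam•(1:R) - w)*(lam•(1:R) - w) := by
      simp only [sub_mul, mul_sub, smul_mul_assoc, mul_smul_comm, smul_smul, mul_one, one_mul]
      module
    rwa [e] at hw2
  have hwmem : w ∈ S.carrier := triple_mem S ha hcmem
  have hbd := (sqrt_bound S (sub_mem S (smul_one_mem S lam) hwmem) ht0 hsq).1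
  -- hbd : t•1 - (lam•1 - w) ∈ Pos
  have hteq : t = lam + A*(Real.sqrt (1 + 2*ρ/A) - 1)*ν := by
    rw [htdef, show lam^2 + 2*ρ*lam*ν = lam^2 * (1 + 2*ρ/A) by
      rw [hlam]; field_simp]
    rw [Real.sqrt_mul (sq_nonneg lam), Real.sqrt_sq hlam0.le]
    rw [hlam]; ring
  have e : t•(1:R) - (lam•(1:R) - w) = w + (A*(Real.sqrt (1 + 2*ρ/A) - 1) * ν)•(1:R) := by
    rw [hteq]; module
  rwa [e] at hbd

lemma jpos {a c : R} (ha : a ∈ S.carrier) (hc : c ∈ S.Pos) : a*c*a ∈ S.Pos := by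
  by_cases ha0 : a = 0
  · simpa [ha0] using zero_pos S
  set T := {ρ : ℝ | 0 ≤ ρ ∧ Hb S a ρ} with hT
  have hne : T.Nonempty := by
    obtain ⟨ρ, h1, h2⟩ := crude S ha; exact ⟨ρ, h1, h2⟩
  have hbdd : BddBelow T := ⟨0, fun ρ hρ => hρ.1⟩
  set L := sInf T with hL
  have hL0 : 0 ≤ L := le_csInf hne (fun ρ hρ => hρ.1)
  have hHL : Hb S a L := by
    intro c' hc'
    by_cases h0 : S.nrm c' = 0
    · exact Hb_trivial S _ hc' h0
    have hc'mem := S.pos_subset hc'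
    have hcn : 0 < S.nrm c' := lt_of_le_of_ne (nrm_nonneg S hc'mem) (Ne.symm h0)
    apply arch' S (S.add_mem (triple_mem S ha hc'mem) (smul_one_mem S _))
    intro ε hε
    have hlt : sInf T < L + ε / S.nrm c' := by
      rw [← hL]; linarith [div_pos hε hcn]
    obtain ⟨ρ, hρT, hρlt⟩ := exists_lt_of_csInf_lt hne hlt
    have hsc : 0 ≤ L * S.nrm c' + ε - ρ * S.nrm c' := by
      have h1 := mul_lt_mul_of_pos_right hρlt hcn
      rw [add_mul, div_mul_cancel₀ _ (ne_of_gt hcn)] at h1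
      linarith
    have h2 := S.pos_add (hρT.2 c' hc') (pos_smul_one S hsc)
    have e : (a*c'*a + (ρ * S.nrm c')•(1:R)) + (L * S.nrm c' + ε - ρ * S.nrm c')•(1:R)
        = (a*c'*a + (L * S.nrm c')•(1:R)) + ε•(1:R) := by module
    rwa [e] at h2
  rcases hL0.lt_or_eq with hpos | hzero
  · exfalso
    set A := S.nrm (a*a) with hA
    have hA0 : 0 < A := nrm_sq_pos S ha ha0
    have hsqge : 1 ≤ Real.sqrt (1 + 2*L/A) := by
      have h6 : (1:ℝ) ≤ 1 + 2*L/A := by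
        have : 0 ≤ 2*L/A := div_nonneg (by linarith) hA0.le
        linarith
      have h7 := Real.sqrt_le_sqrt h6
      rwa [Real.sqrt_one] at h7
    have h1 : A*(Real.sqrt (1 + 2*L/A) - 1) ∈ T :=
      ⟨mul_nonneg hA0.le (by linarith), step S ha ha0 hL0 hHL⟩
    have h2 : sInf T ≤ A*(Real.sqrt (1 + 2*L/A) - 1) := csInf_le hbdd h1
    have h3 : Real.sqrt (1 + 2*L/A) < 1 + L/A := by
      rw [show (1 + L/A) = Real.sqrt ((1 + L/A)^2) from
        Real.sqrt_sq (by positivity) |>.symm]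
      apply Real.sqrt_lt_sqrt (by positivity)
      have hLA : 0 < L/A := div_pos hpos hA0
      rw [show 1+2*L/A = 1+2*(L/A) by ring]
      nlinarith [mul_pos hLA hLA]
    have h4 : A * (L/A) = L := by field_simp
    nlinarith
  · have h5 := hHL c hc
    rw [← hzero] at h5
    simpa using h5


lemma nrm_triple_le {a b : R} (ha : a ∈ S.carrier) (hb : b ∈ S.carrier) :
    S.nrm (a*b*a) ≤ S.nrm (a*a) * S.nrm b := by
  have hnb := nrm_nonneg S hb
  have hna := nrm_nonneg S (sq_mem S ha)
  apply nrm_le S (triple_mem S ha hb) (mul_nonneg hna hnb)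
  · have h1 := jpos S ha (nrm_lower S hb)
    have h2 := S.pos_smul hnb (nrm_upper S (sq_mem S ha))
    have h3 := S.pos_add h1 h2
    have e : a*(b + S.nrm b•(1:R))*a + S.nrm b•(S.nrm (a*a)•(1:R) - a*a)
        = a*b*a + (S.nrm (a*a) * S.nrm b)•(1:R) := by
      simp only [mul_add, add_mul, mul_smul_comm, smul_mul_assoc, smul_sub, smul_smul, mul_one, one_mul]
      module
    rwa [e] at h3
  · have h1 := jpos S ha (nrm_upper S hb)
    have h2 := S.pos_smul hnb (nrm_upper S (sq_mem S ha))
    have h3 := S.pos_add h1 h2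
    have e : a*(S.nrm b•(1:R) - b)*a + S.nrm b•(S.nrm (a*a)•(1:R) - a*a)
        = (S.nrm (a*a) * S.nrm b)•(1:R) - a*b*a := by
      simp only [mul_sub, sub_mul, mul_smul_comm, smul_mul_assoc, smul_sub, smul_smul, mul_one, one_mul]
      module
    rwa [e] at h3


end SAux

open SAux in
/-- Lemma 4.3: (i) `‖aba‖ ≤ ‖a²‖·‖b‖ = ‖a‖²·‖b‖`; (ii) `J_a` is norm continuous;
(iii) if `p ≠ 0` is a projection then `‖p‖ = 1`; (iv) `‖pap‖ ≤ ‖a‖`. -/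
theorem stmt12 (S : SynapticAlgebra R) {a b p : R} (ha : a ∈ S.carrier)
    (hb : b ∈ S.carrier) (hp : S.IsProj p) :
    (S.nrm (a * b * a) ≤ S.nrm (a * a) * S.nrm b ∧
      S.nrm (a * a) * S.nrm b = S.nrm a ^ 2 * S.nrm b) ∧
    (∀ c ∈ S.carrier, ∀ ε : ℝ, 0 < ε → ∃ δ : ℝ, 0 < δ ∧
      ∀ d ∈ S.carrier, S.nrm (d - c) < δ → S.nrm (a * d * a - a * c * a) < ε) ∧
    (p ≠ 0 → S.nrm p = 1) ∧
    (S.nrm (p * a * p) ≤ S.nrm a) := by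
  obtain ⟨hpmem, hpp⟩ := hp
  have hppos : p ∈ S.Pos := by have h := S.SA3 hpmem; rwa [hpp] at h
  have h1p : (1:R) - p ∈ S.Pos := by
    have h := S.SA3 (sub_mem S S.one_mem hpmem)
    have e : ((1:R)-p)*((1:R)-p) = (1:R) - p := by
      simp only [mul_sub, sub_mul, mul_one, one_mul, hpp]; abel
    rwa [e] at h
  refine ⟨⟨nrm_triple_le S ha hb, by rw [nrm_sq S ha]⟩, ?_, ?_, ?_⟩
  · -- (ii) continuity
    intro c hc ε hε
    have hM : 0 ≤ S.nrm a ^ 2 := by positivity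
    refine ⟨ε / (S.nrm a ^ 2 + 1), by positivity, ?_⟩
    intro d hd hlt
    have e1 : a*d*a - a*c*a = a*(d-c)*a := by noncomm_ring
    rw [e1]
    have h2 : S.nrm (a*(d-c)*a) ≤ S.nrm a ^ 2 * S.nrm (d-c) := by
      have := nrm_triple_le S ha (sub_mem S hd hc)
      rwa [nrm_sq S ha] at this
    have h3 : S.nrm a ^ 2 * S.nrm (d-c) ≤ S.nrm a ^ 2 * (ε / (S.nrm a ^ 2 + 1)) :=
      mul_le_mul_of_nonneg_left hlt.le hM
    have h4 : S.nrm a ^ 2 * (ε / (S.nrm a ^ 2 + 1)) < ε := by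
      rw [mul_div_assoc', div_lt_iff₀ (by positivity)]
      nlinarith
    linarith
  · -- (iii)
    intro hp0
    have hle1 : S.nrm p ≤ 1 := by
      apply nrm_le S hpmem zero_le_one
      · have h := S.pos_add hppos S.one_pos
        have e : p + (1:R) = p + (1:ℝ)•(1:R) := by rw [one_smul]
        rwa [e] at h
      · rwa [one_smul]
    have hge1 : ¬ (S.nrm p < 1) := by
      intro hlt
      have h2 := S.SA4 hppos (nrm_upper S hpmem)
      have e2 : p*((S.nrm p)•(1:R) - p)*p = (S.nrm p)•p - p := by
        simp only [mul_sub, sub_mul, mul_smul_comm, smul_mul_assoc, mul_one, one_mul, hpp]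
      rw [e2] at h2
      have h3 : ((1:ℝ) - S.nrm p)•p ∈ S.Pos := S.pos_smul (by linarith) hppos
      have h4 : -(((1:ℝ) - S.nrm p)•p) ∈ S.Pos := by
        have e : -(((1:ℝ) - S.nrm p)•p) = (S.nrm p)•p - p := by module
        rwa [e]
      have h5 := S.pos_antisymm h3 h4
      rcases smul_eq_zero.mp h5 with h6 | h6
      · linarith [h6]
      · exact hp0 h6
    linarith [not_lt.mp hge1]
  · -- (iv)
    have hna := nrm_nonneg S ha
    apply nrm_le S (triple_mem S hpmem ha) hna
    · have h1 := S.SA4 hppos (nrm_lower S ha)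
      have h2 := S.pos_smul hna h1p
      have h3 := S.pos_add h1 h2
      have e : p*(a + S.nrm a•(1:R))*p + S.nrm a•((1:R) - p)
          = p*a*p + S.nrm a•(1:R) := by
        simp only [mul_add, add_mul, mul_smul_comm, smul_mul_assoc, smul_sub, mul_one, one_mul, hpp]
        module
      rwa [e] at h3
    · have h1 := S.SA4 hppos (nrm_upper S ha)
      have h2 := S.pos_smul hna h1p
      have h3 := S.pos_add h1 h2
      have e : p*(S.nrm a•(1:R) - a)*p + S.nrm a•((1:R) - p)
          = S.nrm a•(1:R) - p*a*p := by
        simp only [mul_sub, sub_mul, mul_smul_comm, smul_mul_assoc, smul_sub, mul_one, one_mul, hpp]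
        module
      rwa [e] at h3
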